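/- Let L be a finite lattice and let D be a down-set of L. Suppose that for any a, b ∈ L with a, b ∈ D, a ∧ b ⋖ a, and a ∧ b ⋖ b (where ⋖ denotes the covering relation), one has a ∨ b ∈ D. Then for all a, b ∈ D, a ∨ b ∈ D. -/
import Mathlib

lemma exists_cover_le_aux {L : Type u} [Lattice L] [Finite L] {u v : L} (h : u < v) :
    ∃ w, u ⋖ w ∧ w ≤ v := by
  have hwf : WellFoundedLT L := Finite.to_wellFoundedLT
  obtain ⟨w, ⟨hw1, hw2⟩, hmin⟩ := hwf.wf.has_min {x | u < x ∧ x ≤ v} ⟨v, h, le_rfl⟩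
  exact ⟨w, ⟨hw1, fun c hc hcw => hmin c ⟨hc, hcw.le.trans hw2⟩ hcw⟩, hw2⟩

theorem downSet_join_closed {L : Type u} [Lattice L] [Finite L] (D : Set L)
    (hdown : ∀ x ∈ D, ∀ y : L, y ≤ x → y ∈ D)
    (hcov : ∀ a ∈ D, ∀ b ∈ D, a ⊓ b ⋖ a → a ⊓ b ⋖ b → a ⊔ b ∈ D) :
    ∀ a ∈ D, ∀ b ∈ D, a ⊔ b ∈ D := by
  have key : ∀ n : ℕ, ∀ a ∈ D, ∀ b ∈ D, (Set.Ici (a ⊓ b)).ncard ≤ n → a ⊔ b ∈ D := by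
    intro n
    induction n with
    | zero =>
        intro a _ b _ hle
        have : a ⊓ b ∈ Set.Ici (a ⊓ b) := le_rfl
        have hne : (Set.Ici (a ⊓ b)).ncard ≠ 0 :=
          Set.ncard_ne_zero_of_mem this (Set.toFinite _)
        omega
    | succ n ih =>
        intro a ha b hb hle
        by_cases h1 : a ⊓ b = a
        · have : a ≤ b := by rw [← h1]; exact inf_le_right
          rw [sup_eq_right.mpr this]; exact hb
        by_cases h2 : a ⊓ b = b
        · have : b ≤ a := by rw [← h2]; exact inf_le_left
          rw [sup_eq_left.mpr this]; exact ha
        have hlt1 : a ⊓ b < a := lt_of_le_of_ne inf_le_left h1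
        have hlt2 : a ⊓ b < b := lt_of_le_of_ne inf_le_right h2
        obtain ⟨a', hca', ha'⟩ := exists_cover_le_aux hlt1
        obtain ⟨b', hcb', hb'⟩ := exists_cover_le_aux hlt2
        have ha'D : a' ∈ D := hdown a ha a' ha'
        have hb'D : b' ∈ D := hdown b hb b' hb'
        -- a' ⊓ b' = a ⊓ b
        have hinf : a' ⊓ b' = a ⊓ b :=
          le_antisymm (le_inf (inf_le_left.trans ha') (inf_le_right.trans hb'))
            (le_inf hca'.le hcb'.le)
        have hc : a' ⊔ b' ∈ D := by
          apply hcov a' ha'D b' hb'D <;> rw [hinf] <;> assumption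
        set c := a' ⊔ b' with hcdef
        -- measure decrease helper
        have measure_lt : ∀ x : L, a ⊓ b < x → (Set.Ici x).ncard ≤ n := by
          intro x hx
          have hsub : Set.Ici x ⊆ Set.Ici (a ⊓ b) := Set.Ici_subset_Ici.mpr hx.le
          have hssub : Set.Ici x ⊂ Set.Ici (a ⊓ b) := by
            refine ⟨hsub, fun hsub' => ?_⟩
            have := hsub' (Set.self_mem_Ici)
            exact absurd (Set.mem_Ici.mp this) hx.not_ge
          have := Set.ncard_lt_ncard hssub (Set.toFinite _)
          omega
        -- step 1: a ⊔ c ∈ D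
        have hstep1 : a ⊔ c ∈ D := by
          apply ih a ha c hc
          apply measure_lt
          calc a ⊓ b < a' := hca'.lt
            _ ≤ a ⊓ c := le_inf ha' le_sup_left
        -- step 2: (a ⊔ c) ⊔ b ∈ D, and equals a ⊔ b
        have hstep2 : (a ⊔ c) ⊔ b ∈ D := by
          apply ih (a ⊔ c) hstep1 b hb
          apply measure_lt
          calc a ⊓ b < b' := hcb'.lt
            _ ≤ (a ⊔ c) ⊓ b := le_inf (le_sup_of_le_right le_sup_right) hb'
        have heq : (a ⊔ c) ⊔ b = a ⊔ b := by
          have hcle : c ≤ a ⊔ b := sup_le (ha'.trans le_sup_left) (hb'.trans le_sup_right)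
          exact le_antisymm (sup_le (sup_le le_sup_left hcle) le_sup_right)
            (sup_le (le_sup_of_le_left le_sup_left) le_sup_right)
        rwa [heq] at hstep2
  intro a ha b hb
  exact key _ a ha b hb le_rfl
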